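/- Let T be a tree Mealy machine with finite output alphabet O and U ⊆ Q^T a finite set of states with E(U) > 0. Let σ = i₁ … i_ℓ ∈ I* be the input word along any maximal ADS path from U, i.e., there are sets U = U₀, U₁, …, U_ℓ and outputs o₁, …, o_ℓ such that for each j, i_j ∈ inp(U_{j−1}) attains the maximum in the definition of E(U_{j−1}), U_j = U_{j−1}→^{i_j/o_j} is nonempty, and inp(U_ℓ) = ∅. Then there exist r, r' ∈ U and a prefix τ of σ with λ^T(r, τ) and λ^T(r', τ) both defined and λ^T(r, τ) ≠ λ^T(r', τ); in particular σ has a prefix witnessing r # r'. -/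

import Mathlib

open scoped Classical

/-- A Mealy machine over input alphabet `I` and output alphabet `O`, with state
type `Q`, initial state `q0`, and a partial combined output/transition map
`trans : Q × I ⇀ O × Q` (so the output and transition functions are defined on
exactly the same pairs). -/
structure Mealy (Q I O : Type) where
  q0 : Q
  trans : Q → I → Option (O × Q)

namespace Mealy

variable {Q Q' I O : Type}

/-- Extension of the combined output/transition map to input words. -/
def stepStar (M : Mealy Q I O) : Q → List I → Option (List O × Q)
  | q, [] => some ([], q)
  | q, i :: σ => (M.trans q i).bind fun p =>
      (stepStar M p.2 σ).map fun r => (p.1 :: r.1, r.2)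

/-- `λ(q, σ)`: the output word produced from `q` on input word `σ` (if defined);
this is also the semantics `⟦q⟧ : I* ⇀ O*` of the state `q`. -/
def outStar (M : Mealy Q I O) (q : Q) (σ : List I) : Option (List O) :=
  (M.stepStar q σ).map Prod.fst

/-- `δ(q, σ)`: the state reached from `q` on input word `σ` (if defined). -/
def delStar (M : Mealy Q I O) (q : Q) (σ : List I) : Option Q :=
  (M.stepStar q σ).map Prod.snd

/-- `σ ⊢ q # p`: the word `σ` witnesses apartness of `q` and `p`. -/
def ApartW (M : Mealy Q I O) (σ : List I) (q p : Q) : Prop :=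
  (M.outStar q σ).isSome ∧ (M.outStar p σ).isSome ∧ M.outStar q σ ≠ M.outStar p σ

/-- `q # p`: states `q` and `p` are apart. -/
def Apart (M : Mealy Q I O) (q p : Q) : Prop := ∃ σ, M.ApartW σ q p

/-- `q ≈ r`: states `q` (of `M`) and `r` (of `N`) are equivalent, i.e. have equal
semantics `⟦q⟧ = ⟦r⟧` as partial maps `I* ⇀ O*`. -/
def StateEquiv (M : Mealy Q I O) (N : Mealy Q' I O) (q : Q) (r : Q') : Prop :=
  ∀ σ, M.outStar q σ = N.outStar r σ

/-- A functional simulation `f : M → N`. -/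
def FunSim (M : Mealy Q I O) (N : Mealy Q' I O) (f : Q → Q') : Prop :=
  f M.q0 = N.q0 ∧
    ∀ q i o q'', M.trans q i = some (o, q'') → N.trans (f q) i = some (o, f q'')

/-- A Mealy machine is complete if its transition map is total. -/
def Complete (M : Mealy Q I O) : Prop := ∀ q i, (M.trans q i).isSome

/-- A Mealy machine is a tree if every state is reached from the root by a
unique input word (its access sequence). -/
def IsTree (M : Mealy Q I O) : Prop :=
  ∀ q : Q, ∃! σ : List I, M.delStar M.q0 σ = some q

/-- `S` is a basis of the observation tree `T`: a subtree containing the root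
whose states are pairwise apart. -/
structure IsBasis (T : Mealy Q I O) (S : Set Q) : Prop where
  root_mem : T.q0 ∈ S
  subtree_closed : ∀ q i o q', T.trans q i = some (o, q') → q' ∈ S → q ∈ S
  pairwise_apart : ∀ p ∈ S, ∀ q ∈ S, p ≠ q → T.Apart p q

/-- The frontier `F`: immediate non-basis successors of basis states. -/
def frontier (T : Mealy Q I O) (S : Set Q) : Set Q :=
  {q' | q' ∉ S ∧ ∃ q ∈ S, ∃ i o, T.trans q i = some (o, q')}

/-- The basis `S` is complete: each basis state has a transition for each input. -/
def BasisComplete (T : Mealy Q I O) (S : Set Q) : Prop :=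
  ∀ q ∈ S, ∀ i : I, (T.trans q i).isSome

/-- A Mealy machine `H` with state set `S` contains the basis `S` of `T`:
`δ^H(q0^H, access(q)) = q` for every `q ∈ S`. -/
def ContainsBasis (T : Mealy Q I O) (S : Set Q) (H : Mealy ↥S I O) : Prop :=
  ∀ (q : ↥S) (σ : List I), T.delStar T.q0 σ = some (q : Q) → H.delStar H.q0 σ = some q

/-- `H` is a hypothesis for the observation tree `T` with basis `S`. -/
def IsHypothesis (T : Mealy Q I O) (S : Set Q) (H : Mealy ↥S I O) : Prop :=
  H.Complete ∧ ContainsBasis T S H ∧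
    ∀ (q : ↥S) (i : I) (o' : O) (p' : ↥S), H.trans q i = some (o', p') →
      ∀ (o : O) (p : Q), T.trans (q : Q) i = some (o, p) → o = o' ∧ ¬ T.Apart p (p' : Q)

/-- The equivalence `≈` on the states of a single machine, as a setoid. -/
def equivSetoid (M : Mealy Q I O) : Setoid Q :=
  ⟨fun q r => M.StateEquiv M q r,
   ⟨fun _ _ => rfl, fun h σ => (h σ).symm, fun h1 h2 σ => (h1 σ).trans (h2 σ)⟩⟩

/-- `R` is a bisimulation between `M` and `N`. -/
def IsBisimulation (M : Mealy Q I O) (N : Mealy Q' I O) (R : Q → Q' → Prop) : Prop :=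
  R M.q0 N.q0 ∧
    ∀ q r, R q r → ∀ i o q', M.trans q i = some (o, q') →
      ∃ r', N.trans r i = some (o, r') ∧ R q' r'


/-- `inp(U)`: inputs enabled in some state of `U`. -/
noncomputable def inpSet [Fintype I] (M : Mealy Q I O) (U : Set Q) : Finset I :=
  Finset.univ.filter fun i => ∃ q ∈ U, (M.trans q i).isSome

/-- `U →^i`: the states of `U` where input `i` is enabled. -/
def arrowSet (M : Mealy Q I O) (U : Set Q) (i : I) : Set Q :=
  {q ∈ U | (M.trans q i).isSome}

/-- `U →^{i/o}`: the `i/o`-successors of states in `U`. -/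
def stepSet (M : Mealy Q I O) (U : Set Q) (i : I) (o : O) : Set Q :=
  {q' | ∃ q ∈ U, M.trans q i = some (o, q')}

/-- The inner expression of the expected-reward recurrence for input `i`, where
`E'` plays the role of the recursive call. -/
noncomputable def rewardAux [Fintype O] (M : Mealy Q I O) (E' : Set Q → ℚ)
    (U : Set Q) (i : I) : ℚ :=
  ∑ o : O,
    ((M.stepSet U i o).ncard : ℚ) *
        (((M.arrowSet U i).ncard : ℚ) - ((M.stepSet U i o).ncard : ℚ)
          + E' (M.stepSet U i o))
      / ((M.arrowSet U i).ncard : ℚ)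

/-- Fueled version of the expected reward `E(U)`; the maximum over the empty
set is `0`. -/
noncomputable def Efuel [Fintype I] [Fintype O] (M : Mealy Q I O) :
    ℕ → Set Q → ℚ
  | 0, _ => 0
  | n + 1, U => ((M.inpSet U).image (M.rewardAux (M.Efuel n) U)).max.unbotD 0

/-- The expected reward `E(U)`.  Since in a tree Mealy machine with finite state
space every chain `U, U→^{i/o}, …` reaches a set with no enabled inputs within
`Fintype.card Q` steps, fuel `Fintype.card Q + 1` realizes the recursive
definition `E(U) = max_{i ∈ inp(U)} Σ_o |U→^{i/o}|·(|U→^i| − |U→^{i/o}| + E(U→^{i/o}))/|U→^i|`. -/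
noncomputable def expectedReward [Fintype Q] [Fintype I] [Fintype O]
    (M : Mealy Q I O) (U : Set Q) : ℚ :=
  M.Efuel (Fintype.card Q + 1) U

/-- The value of the expression inside the maximum defining `E(U)`, for a given
input `i`; an input `i ∈ inp(U)` attains the maximum in the definition of
`E(U)` iff `rewardFor M U i = expectedReward M U`. -/
noncomputable def rewardFor [Fintype Q] [Fintype I] [Fintype O]
    (M : Mealy Q I O) (U : Set Q) (i : I) : ℚ :=
  M.rewardAux (M.Efuel (Fintype.card Q)) U i

end Mealy

section Aux
variable {Q I O : Type}

lemma stepStar_append (M : Mealy Q I O) (q : Q) (σ τ : List I) :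
    M.stepStar q (σ ++ τ) = (M.stepStar q σ).bind fun r =>
      (M.stepStar r.2 τ).map fun s => (r.1 ++ s.1, s.2) := by
  induction σ generalizing q with
  | nil => simp [Mealy.stepStar]
  | cons i σ ih =>
    simp only [List.cons_append, Mealy.stepStar]
    cases M.trans q i with
    | none => simp
    | some p =>
      simp only [Option.bind_some]
      rw [ih p.2]
      cases M.stepStar p.2 σ with
      | none => simp
      | some r =>
        simp only [Option.map_some, Option.bind_some]
        cases h : M.stepStar r.2 τ <;> simp [h]

lemma delStar_append (M : Mealy Q I O) (q : Q) (σ τ : List I) :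
    M.delStar q (σ ++ τ) = (M.delStar q σ).bind fun p => M.delStar p τ := by
  simp only [Mealy.delStar, stepStar_append]
  cases M.stepStar q σ with
  | none => simp
  | some r =>
    simp only [Option.bind_some, Option.map_some]
    cases h : M.stepStar r.2 τ <;> simp [h]

lemma delStar_single (M : Mealy Q I O) (q : Q) (i : I) :
    M.delStar q [i] = (M.trans q i).map Prod.snd := by
  simp only [Mealy.delStar, Mealy.stepStar]
  cases M.trans q i <;> simp [Mealy.stepStar]

/-- In a tree, the transition function is "backwards deterministic". -/
lemma tree_inj (T : Mealy Q I O) (htree : T.IsTree) {q p s : Q} {i : I} {o o' : O}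
    (hq : T.trans q i = some (o, s)) (hp : T.trans p i = some (o', s)) : q = p := by
  obtain ⟨σq, hσq, -⟩ := htree q
  obtain ⟨σp, hσp, -⟩ := htree p
  obtain ⟨σs, -, huniq⟩ := htree s
  have h1 : T.delStar T.q0 (σq ++ [i]) = some s := by
    rw [delStar_append, hσq, Option.bind_some, delStar_single, hq]; rfl
  have h2 : T.delStar T.q0 (σp ++ [i]) = some s := by
    rw [delStar_append, hσp, Option.bind_some, delStar_single, hp]; rfl
  have e : σq ++ [i] = σp ++ [i] := (huniq _ h1).trans (huniq _ h2).symm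
  have e2 : σq = σp := by simpa using e
  rw [e2, hσp] at hσq
  exact (Option.some.inj hσq).symm

lemma mem_arrowSet {M : Mealy Q I O} {U : Set Q} {i : I} {q : Q} :
    q ∈ M.arrowSet U i ↔ q ∈ U ∧ (M.trans q i).isSome := Iff.rfl

lemma ncard_stepSet_le [Fintype Q] (M : Mealy Q I O) (U : Set Q) (i : I) (o : O) :
    (M.stepSet U i o).ncard ≤ (M.arrowSet U i).ncard := by
  classical
  set f : Q → Q := fun q => ((M.trans q i).map Prod.snd).getD q with hf
  have hsub : M.stepSet U i o ⊆ f '' M.arrowSet U i := by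
    rintro q' ⟨q, hqU, hq⟩
    exact ⟨q, ⟨hqU, by rw [hq]; rfl⟩, by simp [hf, hq]⟩
  calc (M.stepSet U i o).ncard ≤ (f '' M.arrowSet U i).ncard :=
        Set.ncard_le_ncard hsub (Set.toFinite _)
    _ ≤ (M.arrowSet U i).ncard := Set.ncard_image_le (Set.toFinite _)

lemma rewardAux_nonneg [Fintype Q] [Fintype O] (M : Mealy Q I O) (E' : Set Q → ℚ)
    (hE' : ∀ V, 0 ≤ E' V) (U : Set Q) (i : I) : 0 ≤ M.rewardAux E' U i := by
  refine Finset.sum_nonneg fun o _ => div_nonneg (mul_nonneg (by positivity) ?_) (by positivity)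
  have h := ncard_stepSet_le M U i o
  have h' : ((M.stepSet U i o).ncard : ℚ) ≤ ((M.arrowSet U i).ncard : ℚ) := by exact_mod_cast h
  linarith [hE' (M.stepSet U i o)]

lemma finmax_nonneg {α : Type} [DecidableEq α] {s : Finset α} {f : α → ℚ}
    (h : ∀ i ∈ s, 0 ≤ f i) : 0 ≤ ((s.image f).max.unbotD 0) := by
  rcases s.eq_empty_or_nonempty with rfl | hne
  · simp
  · have hne' : (s.image f).Nonempty := hne.image f
    rw [← Finset.coe_max' hne', WithBot.unbotD_coe]
    obtain ⟨i, hi, hfi⟩ := Finset.mem_image.1 (Finset.max'_mem _ hne')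
    rw [← hfi]; exact h i hi

lemma finmax_le {α : Type} [DecidableEq α] {s : Finset α} {f g : α → ℚ}
    (h : ∀ i ∈ s, f i ≤ g i) :
    ((s.image f).max.unbotD 0) ≤ ((s.image g).max.unbotD 0) := by
  rcases s.eq_empty_or_nonempty with rfl | hne
  · simp
  · have hnf : (s.image f).Nonempty := hne.image f
    have hng : (s.image g).Nonempty := hne.image g
    rw [← Finset.coe_max' hnf, ← Finset.coe_max' hng, WithBot.unbotD_coe, WithBot.unbotD_coe]
    obtain ⟨i, hi, hfi⟩ := Finset.mem_image.1 (Finset.max'_mem _ hnf)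
    rw [← hfi]
    exact le_trans (h i hi) (Finset.le_max' _ _ (Finset.mem_image_of_mem g hi))

lemma rewardAux_mono [Fintype Q] [Fintype O] (M : Mealy Q I O) {E1 E2 : Set Q → ℚ}
    (h : ∀ V, E1 V ≤ E2 V) (U : Set Q) (i : I) :
    M.rewardAux E1 U i ≤ M.rewardAux E2 U i := by
  refine Finset.sum_le_sum fun o _ => ?_
  rcases eq_or_lt_of_le (show (0:ℚ) ≤ ((M.arrowSet U i).ncard : ℚ) by positivity) with hA | hA
  · rw [← hA]; simp
  · rw [div_le_div_iff_of_pos_right hA]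
    have := h (M.stepSet U i o)
    nlinarith [show (0:ℚ) ≤ ((M.stepSet U i o).ncard : ℚ) by positivity]

lemma Efuel_nonneg [Fintype Q] [Fintype I] [Fintype O] (M : Mealy Q I O) :
    ∀ n U, 0 ≤ M.Efuel n U := by
  intro n
  induction n with
  | zero => intro U; simp [Mealy.Efuel]
  | succ n ih =>
    intro U
    exact finmax_nonneg fun i _ => rewardAux_nonneg M _ ih U i

lemma Efuel_mono [Fintype Q] [Fintype I] [Fintype O] (M : Mealy Q I O) :
    ∀ n U, M.Efuel n U ≤ M.Efuel (n + 1) U := by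
  intro n
  induction n with
  | zero =>
    intro U
    simpa [Mealy.Efuel] using Efuel_nonneg M 1 U
  | succ n ih =>
    intro U
    exact finmax_le fun i _ => rewardAux_mono M (fun V => ih V) U i

/-- The key collapse: if all states of `U` enabled on `i` output `ob` and `T`
is a tree, the reward for `i` is exactly `E'` of the successor set. -/
lemma rewardAux_no_split [Fintype Q] [Fintype O] (T : Mealy Q I O) (htree : T.IsTree)
    (E' : Set Q → ℚ) (U : Set Q) (i : I) (ob : O)
    (hi : ∃ q ∈ U, (T.trans q i).isSome)
    (hall : ∀ q ∈ U, ∀ o p, T.trans q i = some (o, p) → o = ob) :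
    T.rewardAux E' U i = E' (T.stepSet U i ob) := by
  classical
  set f : Q → Q := fun q => ((T.trans q i).map Prod.snd).getD q with hf
  have hAS : T.stepSet U i ob = f '' T.arrowSet U i := by
    ext q'
    constructor
    · rintro ⟨q, hqU, hq⟩
      exact ⟨q, ⟨hqU, by rw [hq]; rfl⟩, by simp [hf, hq]⟩
    · rintro ⟨q, ⟨hqU, hqs⟩, rfl⟩
      obtain ⟨⟨o, p⟩, hop⟩ := Option.isSome_iff_exists.1 hqs
      have : o = ob := hall q hqU o p hop
      subst this
      exact ⟨q, hqU, by rw [hop]; simp [hf, hop]⟩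
  have hinj : Set.InjOn f (T.arrowSet U i) := by
    rintro a ⟨haU, has⟩ b ⟨hbU, hbs⟩ hab
    obtain ⟨⟨oa, pa⟩, hopa⟩ := Option.isSome_iff_exists.1 has
    obtain ⟨⟨ob', pb⟩, hopb⟩ := Option.isSome_iff_exists.1 hbs
    have : pa = pb := by simpa [hf, hopa, hopb] using hab
    subst this
    exact tree_inj T htree hopa hopb
  have hcard : (T.stepSet U i ob).ncard = (T.arrowSet U i).ncard := by
    rw [hAS]; exact Set.ncard_image_of_injOn hinj
  have hempty : ∀ o : O, o ≠ ob → T.stepSet U i o = ∅ := by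
    intro o ho
    ext q'
    simp only [Set.mem_empty_iff_false, iff_false]
    rintro ⟨q, hqU, hq⟩
    exact ho (hall q hqU o q' hq)
  obtain ⟨q0, hq0U, hq0s⟩ := hi
  have hApos : 0 < (T.arrowSet U i).ncard :=
    (Set.ncard_pos (Set.toFinite _)).2 ⟨q0, hq0U, hq0s⟩
  have hAne : ((T.arrowSet U i).ncard : ℚ) ≠ 0 := by exact_mod_cast hApos.ne'
  rw [Mealy.rewardAux, Finset.sum_eq_single ob]
  · rw [hcard]
    field_simp
    ring
  · intro o _ ho
    rw [hempty o ho]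
    simp
  · intro h
    exact absurd (Finset.mem_univ ob) h


lemma ofFn_succ_concat {α : Type} (f : ℕ → α) (n : ℕ) :
    (List.ofFn fun k : Fin (n+1) => f k) = (List.ofFn fun k : Fin n => f k) ++ [f n] := by
  rw [List.ofFn_succ']
  simp [List.concat_eq_append]

lemma ofFn_prefix {α : Type} (f : ℕ → α) {m n : ℕ} (h : m ≤ n) :
    (List.ofFn fun k : Fin m => f k) <+: (List.ofFn fun k : Fin n => f k) := by
  induction n with
  | zero =>
    have : m = 0 := Nat.le_zero.1 h
    subst this; exact List.prefix_refl _
  | succ n ih =>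
    rcases Nat.lt_or_ge m (n+1) with hlt | hge
    · exact (ih (Nat.lt_succ_iff.1 hlt)).trans
        (by rw [ofFn_succ_concat]; exact List.prefix_append _ _)
    · have : m = n + 1 := le_antisymm h hge
      subst this; exact List.prefix_refl _

lemma trace {Q I O : Type} [Fintype I] (T : Mealy Q I O) (l : ℕ) (Us : ℕ → Set Q)
    (ins : ℕ → I) (outs : ℕ → O)
    (hsteps : ∀ k < l, Us (k+1) = T.stepSet (Us k) (ins k) (outs k)) :
    ∀ j, j ≤ l → ∀ q ∈ Us j, ∃ r ∈ Us 0,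
      T.stepStar r (List.ofFn fun k : Fin j => ins k) =
        some (List.ofFn (fun k : Fin j => outs k), q) := by
  intro j
  induction j with
  | zero => intro _ q hq; exact ⟨q, hq, by simp [Mealy.stepStar]⟩
  | succ j ih =>
    intro hjl q hq
    have hjl' : j < l := Nat.lt_of_succ_le hjl
    rw [hsteps j hjl'] at hq
    obtain ⟨p, hp, htr⟩ := hq
    obtain ⟨r, hr, hss⟩ := ih (le_of_lt hjl') p hp
    refine ⟨r, hr, ?_⟩
    rw [ofFn_succ_concat ins, ofFn_succ_concat outs, stepStar_append, hss]
    simp [Mealy.stepStar, htr]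

end Aux

/-- Let `T` be a tree Mealy machine (finite `O`) and `U` with
`E(U) > 0`.  Let `σ = i₁…i_ℓ` be the input word along any maximal ADS path from
`U`: there are sets `U = U₀, U₁, …, U_ℓ` and outputs `o₁, …, o_ℓ` such that each
`i_{j+1} ∈ inp(U_j)` attains the maximum in the definition of `E(U_j)`,
`U_{j+1} = U_j →^{i_{j+1}/o_{j+1}}` is nonempty, and `inp(U_ℓ) = ∅`.  Then
there are `r, r' ∈ U` and a prefix `τ` of `σ` with `λ^T(r, τ)` and `λ^T(r', τ)`
both defined and different (so a prefix of `σ` witnesses `r # r'`). -/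
theorem statement_16 {Q I O : Type} [Fintype Q] [Fintype I] [Fintype O]
    (T : Mealy Q I O) (htree : T.IsTree) (U : Set Q)
    (hE : 0 < T.expectedReward U)
    (l : ℕ) (Us : ℕ → Set Q) (ins : ℕ → I) (outs : ℕ → O)
    (h0 : Us 0 = U)
    (hstep : ∀ j < l,
      ins j ∈ T.inpSet (Us j) ∧
      T.rewardFor (Us j) (ins j) = T.expectedReward (Us j) ∧
      Us (j + 1) = T.stepSet (Us j) (ins j) (outs j) ∧
      (Us (j + 1)).Nonempty)
    (hend : T.inpSet (Us l) = ∅) :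
    ∃ r ∈ U, ∃ r' ∈ U, ∃ τ : List I,
      τ <+: List.ofFn (fun j : Fin l => ins j) ∧
      (T.outStar r τ).isSome ∧ (T.outStar r' τ).isSome ∧
      T.outStar r τ ≠ T.outStar r' τ := by
  classical
  by_cases hsplit : ∃ j, j < l ∧ ∃ q ∈ Us j, ∃ q' ∈ Us j, ∃ o p o' p',
      T.trans q (ins j) = some (o, p) ∧ T.trans q' (ins j) = some (o', p') ∧ o ≠ o'
  · obtain ⟨j, hj, q, hqU, q', hq'U, o, p, o', p', ht, ht', hoo'⟩ := hsplit
    have hsteps : ∀ k < l, Us (k+1) = T.stepSet (Us k) (ins k) (outs k) :=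
      fun k hk => (hstep k hk).2.2.1
    obtain ⟨r, hr, hss⟩ := trace T l Us ins outs hsteps j (le_of_lt hj) q hqU
    obtain ⟨r', hr', hss'⟩ := trace T l Us ins outs hsteps j (le_of_lt hj) q' hq'U
    rw [h0] at hr hr'
    have e1 : T.outStar r ((List.ofFn fun k : Fin j => ins k) ++ [ins j]) =
        some ((List.ofFn fun k : Fin j => outs k) ++ [o]) := by
      simp [Mealy.outStar, stepStar_append, hss, Mealy.stepStar, ht]
    have e2 : T.outStar r' ((List.ofFn fun k : Fin j => ins k) ++ [ins j]) =
        some ((List.ofFn fun k : Fin j => outs k) ++ [o']) := by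
      simp [Mealy.outStar, stepStar_append, hss', Mealy.stepStar, ht']
    refine ⟨r, hr, r', hr', (List.ofFn fun k : Fin j => ins k) ++ [ins j], ?_, ?_, ?_, ?_⟩
    · rw [← ofFn_succ_concat ins]
      exact ofFn_prefix ins hj
    · rw [e1]; rfl
    · rw [e2]; rfl
    · rw [e1, e2]
      intro h
      exact hoo' (by simpa using h)
  · push_neg at hsplit
    exfalso
    have chain : ∀ j, j ≤ l → T.expectedReward U ≤ T.expectedReward (Us j) := by
      intro j
      induction j with
      | zero => intro _; rw [h0]
      | succ j ih =>
        intro hjl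
        have hj : j < l := Nat.lt_of_succ_le hjl
        obtain ⟨hinp, hrew, hUs, hne⟩ := hstep j hj
        have hi : ∃ q ∈ Us j, (T.trans q (ins j)).isSome := by
          simpa [Mealy.inpSet] using hinp
        have hall : ∀ q ∈ Us j, ∀ o p, T.trans q (ins j) = some (o, p) → o = outs j := by
          obtain ⟨w, hw⟩ := hne
          rw [hUs] at hw
          obtain ⟨q0, hq0, ht0⟩ := hw
          intro q hq o p ht
          exact hsplit j hj q hq q0 hq0 o p (outs j) w ht ht0
        have key : T.expectedReward (Us j) = T.Efuel (Fintype.card Q) (Us (j+1)) := by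
          rw [← hrew, Mealy.rewardFor, rewardAux_no_split T htree _ _ _ _ hi hall, ← hUs]
        calc T.expectedReward U ≤ T.expectedReward (Us j) := ih (le_of_lt hj)
          _ = T.Efuel (Fintype.card Q) (Us (j+1)) := key
          _ ≤ T.Efuel (Fintype.card Q + 1) (Us (j+1)) := Efuel_mono T _ _
          _ = T.expectedReward (Us (j+1)) := rfl
    have hzero : T.expectedReward (Us l) = 0 := by
      simp [Mealy.expectedReward, Mealy.Efuel, hend]
    linarith [chain l le_rfl]
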